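/- Consider the discrete-time LTI system ξ(k+1) = ξ(k) + α·u(k), y(k) = ξ(k) + D·u(k) with α > 0. If 0 < D < α/2, then the system is not passive: for every β ≤ 0 there exist an input sequence u, initial condition ξ(0) = 0, and T ∈ ℤ_{>0} such that ∑_{k=0}^{T-1} ⟨u(k), y(k)⟩ < β. -/
import Mathlib


open scoped RealInnerProductSpace

/-- If `0 < D < α/2` then the modified GD controller is not passive: every candidate
lower bound `β ≤ 0` is violated by some input over some finite horizon. -/
theorem stmt_3 {n : ℕ} (hn : 0 < n) (α D : ℝ) (hα : 0 < α) (hD0 : 0 < D)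
    (hD : D < α / 2) :
    ∀ β : ℝ, β ≤ 0 →
      ∃ (u ξ y : ℕ → EuclideanSpace ℝ (Fin n)) (T : ℕ),
        ξ 0 = 0 ∧
        (∀ k, ξ (k + 1) = ξ k + α • u k) ∧
        (∀ k, y k = ξ k + D • u k) ∧
        0 < T ∧
        ∑ k ∈ Finset.range T, ⟪u k, y k⟫ < β := by
  intro β hβ
  set e : EuclideanSpace ℝ (Fin n) := EuclideanSpace.single ⟨0, hn⟩ 1 with he
  have hee : ⟪e, e⟫ = 1 := by
    simp [he, real_inner_self_eq_norm_sq, EuclideanSpace.norm_single]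
  set u : ℕ → EuclideanSpace ℝ (Fin n) := fun k => ((-1 : ℝ) ^ k) • e with hu
  set ξ : ℕ → EuclideanSpace ℝ (Fin n) := fun k => if Even k then 0 else α • e with hξ
  set y : ℕ → EuclideanSpace ℝ (Fin n) := fun k => ξ k + D • u k with hy
  set c : ℝ := 2 * D - α with hc
  have hcneg : c < 0 := by linarith
  have hf : ∀ k, ⟪u k, y k⟫ = if Even k then D else D - α := by
    intro k
    rcases Nat.even_or_odd k with hk | hk
    · have h1 : ((-1 : ℝ) ^ k) = 1 := hk.neg_one_pow
      have hu' : u k = e := by simp [hu, h1]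
      have hy' : y k = D • e := by simp [hy, hξ, hk, hu']
      rw [hu', hy', real_inner_smul_right, hee, if_pos hk]; ring
    · have h1 : ((-1 : ℝ) ^ k) = -1 := hk.neg_one_pow
      have hk' : ¬ Even k := Nat.not_even_iff_odd.mpr hk
      have hu' : u k = -e := by simp [hu, h1]
      have hy' : y k = α • e + D • (-e) := by simp [hy, hξ, hk', hu']
      rw [hu', hy', if_neg hk']
      simp only [inner_add_right, real_inner_smul_right, inner_neg_left, inner_neg_right, inner_neg_neg, hee]
      ring
  have hsum : ∀ N : ℕ, ∑ k ∈ Finset.range (2 * N), ⟪u k, y k⟫ = N * c := by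
    intro N
    induction N with
    | zero => simp
    | succ N ih =>
      have : 2 * (N + 1) = 2 * N + 1 + 1 := by ring
      rw [this, Finset.sum_range_succ, Finset.sum_range_succ, ih,
        hf (2 * N), hf (2 * N + 1)]
      have h2 : Even (2 * N) := even_two_mul N
      have h3 : ¬ Even (2 * N + 1) := by simp [Nat.even_add_one, h2]
      rw [if_pos h2, if_neg h3]
      push_cast
      ring
  set N : ℕ := ⌈β / c⌉₊ + 1 with hN
  have hNgt : (N : ℝ) > β / c := by
    have h0 : 0 ≤ β / c := by
      rw [← neg_div_neg_eq]; exact div_nonneg (by linarith) (by linarith)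
    have := Nat.le_ceil (β / c)
    push_cast [hN]
    linarith
  have hNc : (N : ℝ) * c < β := by
    have := (div_lt_iff_of_neg hcneg).mp hNgt
    linarith
  refine ⟨u, ξ, y, 2 * N, ?_, ?_, fun k => rfl, by positivity, ?_⟩
  · simp [hξ]
  · intro k
    rcases Nat.even_or_odd k with hk | hk
    · have h1 : ((-1 : ℝ) ^ k) = 1 := hk.neg_one_pow
      have hk1 : ¬ Even (k + 1) := by simp [Nat.even_add_one, hk]
      simp [hξ, hu, hk, hk1, h1]
    · have h1 : ((-1 : ℝ) ^ k) = -1 := hk.neg_one_pow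
      have hk' : ¬ Even k := Nat.not_even_iff_odd.mpr hk
      have hk1 : Even (k + 1) := by simpa [Nat.even_add_one] using hk'
      simp only [hξ, hu, if_pos hk1, if_neg hk', h1]
      module
  · rw [hsum N]; exact hNc
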